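/- For a left R-module M, the following conditions are equivalent: (1) the intersection graph G(M) is triangle-free, i.e. there do not exist three distinct nontrivial submodules of M which pairwise have nonzero intersection; (2) M is of one of the following types: (i) the submodules of M are totally ordered by inclusion and M has length at most 3; (ii) M = S₁ + S₂ with S₁, S₂ simple submodules satisfying S₁ ∩ S₂ = 0; (iii) there exist simple submodules S₁, S₂ of M with S₁ ∩ S₂ = 0 such that Soc(M) = S₁ + S₂ and Soc(M) is the unique maximal submodule of M (and Soc(M) ≠ M). -/

import Mathlib

/-- The socle of a module: the sum of all its simple submodules. -/
def socle (R : Type*) [Ring R] (M : Type*) [AddCommGroup M] [Module R M] :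
    Submodule R M :=
  sSup {A : Submodule R M | IsSimpleModule R A}

section Aux

variable {α : Type*} [Lattice α] [BoundedOrder α] [IsModularLattice α]

/-- In a modular lattice, if `T = S₁ ⊔ S₂` is a join of two atoms with `S₁ ⊓ S₂ = ⊥`,
then every element strictly between `⊥` and `T` is an atom. -/
lemma aux_len2_atom {S₁ S₂ A : α} (h1 : IsAtom S₁) (h2 : IsAtom S₂)
    (h12 : S₁ ⊓ S₂ = ⊥) (hA0 : A ≠ ⊥) (hAT : A < S₁ ⊔ S₂) : IsAtom A := by
  by_cases hS1A : S₁ ≤ A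
  · have key : A = S₁ ⊔ S₂ ⊓ A := by
      rw [← sup_inf_assoc_of_le S₂ hS1A]
      exact (inf_eq_right.mpr hAT.le).symm
    rcases h2.le_iff.mp (inf_le_left : S₂ ⊓ A ≤ S₂) with h | h
    · rw [h, sup_bot_eq] at key; rw [key]; exact h1
    · exfalso
      have : S₂ ≤ A := by rw [← h]; exact inf_le_right
      exact hAT.ne (le_antisymm hAT.le (sup_le hS1A this))
  by_cases hS2A : S₂ ≤ A
  · have key : A = S₂ ⊔ S₁ ⊓ A := by
      rw [← sup_inf_assoc_of_le S₁ hS2A]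
      exact (inf_eq_right.mpr (by rw [sup_comm]; exact hAT.le)).symm
    rcases h1.le_iff.mp (inf_le_left : S₁ ⊓ A ≤ S₁) with h | h
    · rw [h, sup_bot_eq] at key; rw [key]; exact h2
    · exfalso
      have : S₁ ≤ A := by rw [← h]; exact inf_le_right
      exact hAT.ne (le_antisymm hAT.le (sup_le this hS2A))
  -- now A ⊓ S₁ = ⊥
  have hAS1 : A ⊓ S₁ = ⊥ := by
    rcases h1.le_iff.mp (inf_le_right : A ⊓ S₁ ≤ S₁) with h | h
    · exact h
    · exact absurd (by rw [← h]; exact inf_le_left) hS1A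
  refine ⟨hA0, fun B hB => ?_⟩
  by_contra hB0
  -- S₁ ⊔ B = S₁ ⊔ S₂
  have hBnS1 : ¬ B ≤ S₁ := by
    intro hle
    exact hB0 (le_bot_iff.mp (hAS1 ▸ le_inf hB.le hle))
  have hK : S₁ ⊔ B = S₁ ⊔ S₂ := by
    have hle : S₁ ⊔ B ≤ S₁ ⊔ S₂ := sup_le le_sup_left (hB.le.trans hAT.le)
    have key : (S₁ ⊔ S₂) ⊓ (S₁ ⊔ B) = S₁ ⊔ S₂ ⊓ (S₁ ⊔ B) :=
      sup_inf_assoc_of_le S₂ le_sup_left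
    rw [inf_eq_right.mpr hle] at key
    rcases h2.le_iff.mp (inf_le_left : S₂ ⊓ (S₁ ⊔ B) ≤ S₂) with h | h
    · rw [h, sup_bot_eq] at key
      exact absurd (key ▸ le_sup_right : B ≤ S₁) hBnS1
    · have : S₂ ≤ S₁ ⊔ B := by rw [← h]; exact inf_le_right
      exact le_antisymm hle (sup_le le_sup_left this)
  -- A = B by modularity
  have key : (B ⊔ S₁) ⊓ A = B ⊔ S₁ ⊓ A := sup_inf_assoc_of_le S₁ hB.le
  rw [sup_comm B S₁, hK, inf_eq_right.mpr hAT.le, inf_comm S₁ A, hAS1, sup_bot_eq] at key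
  exact hB.ne' key

end Aux

/-- For a module `M` the following are equivalent:
(1) `G(M)` is triangle-free;
(2) `M` is of one of the following types:
(i) the submodules of `M` are totally ordered by inclusion and `M` has length at most `3`
(i.e. there is no chain `⊥ < A < B < C < ⊤`);
(ii) `M = S₁ ⊕ S₂` with `S₁`, `S₂` simple;
(iii) there are simple submodules `S₁`, `S₂` with `S₁ ⊓ S₂ = ⊥` such that
`Soc(M) = S₁ ⊔ S₂` is the unique maximal submodule of `M`. -/
theorem statement18 {R : Type*} [Ring R] {M : Type*} [AddCommGroup M] [Module R M] :
    (¬ ∃ A B C : Submodule R M,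
        (A ≠ ⊥ ∧ A ≠ ⊤) ∧ (B ≠ ⊥ ∧ B ≠ ⊤) ∧ (C ≠ ⊥ ∧ C ≠ ⊤) ∧
        A ≠ B ∧ A ≠ C ∧ B ≠ C ∧
        A ⊓ B ≠ ⊥ ∧ A ⊓ C ≠ ⊥ ∧ B ⊓ C ≠ ⊥) ↔
    (((∀ A B : Submodule R M, A ≤ B ∨ B ≤ A) ∧
        ¬ ∃ A B C : Submodule R M, ⊥ < A ∧ A < B ∧ B < C ∧ C < ⊤) ∨
      (∃ S₁ S₂ : Submodule R M, IsSimpleModule R S₁ ∧ IsSimpleModule R S₂ ∧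
        S₁ ⊓ S₂ = ⊥ ∧ S₁ ⊔ S₂ = ⊤) ∨
      (∃ S₁ S₂ : Submodule R M, IsSimpleModule R S₁ ∧ IsSimpleModule R S₂ ∧
        S₁ ⊓ S₂ = ⊥ ∧ socle R M = S₁ ⊔ S₂ ∧
        IsCoatom (socle R M) ∧
        ∀ K : Submodule R M, IsCoatom K → K = socle R M)) := by
  constructor
  · -- forward direction
    intro h
    have tri : ∀ A B C : Submodule R M, A ≠ ⊥ → A ≠ ⊤ → B ≠ ⊥ → B ≠ ⊤ → C ≠ ⊥ → C ≠ ⊤ →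
        A ≠ B → A ≠ C → B ≠ C → A ⊓ B ≠ ⊥ → A ⊓ C ≠ ⊥ → B ⊓ C ≠ ⊥ → False := by
      intro A B C h1 h2 h3 h4 h5 h6 h7 h8 h9 h10 h11 h12
      exact h ⟨A, B, C, ⟨h1, h2⟩, ⟨h3, h4⟩, ⟨h5, h6⟩, h7, h8, h9, h10, h11, h12⟩
    have chain : ∀ x y z : Submodule R M, ⊥ < x → x < y → y < z → z < ⊤ → False := by
      intro x y z h1 h2 h3 h4
      refine tri x y z h1.ne' (h2.trans (h3.trans h4)).ne (h1.trans h2).ne'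
        (h3.trans h4).ne (h1.trans (h2.trans h3)).ne' h4.ne h2.ne (h2.trans h3).ne h3.ne ?_ ?_ ?_
      · rw [inf_eq_left.mpr h2.le]; exact h1.ne'
      · rw [inf_eq_left.mpr (h2.trans h3).le]; exact h1.ne'
      · rw [inf_eq_left.mpr h3.le]; exact (h1.trans h2).ne'
    have incomp_inf : ∀ X Y : Submodule R M, ¬ X ≤ Y → ¬ Y ≤ X → X ⊓ Y = ⊥ := by
      intro X Y hXY hYX
      by_contra hne
      refine tri X Y (X ⊓ Y) (fun e => hXY (e ▸ bot_le)) (fun e => hYX (e ▸ le_top))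
        (fun e => hYX (e ▸ bot_le)) (fun e => hXY (e ▸ le_top)) hne
        (fun e => hXY ((le_top.trans_eq e.symm).trans inf_le_right)) (fun e => hXY e.le)
        (fun e => hXY (e.le.trans inf_le_right)) (fun e => hYX (e.le.trans inf_le_left))
        hne ?_ ?_
      · rw [inf_eq_right.mpr (inf_le_left : X ⊓ Y ≤ X)]; exact hne
      · rw [inf_eq_right.mpr (inf_le_right : X ⊓ Y ≤ Y)]; exact hne
    have incomp_atom : ∀ X Y : Submodule R M, ¬ X ≤ Y → ¬ Y ≤ X → IsAtom X := by
      intro X Y hXY hYX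
      have h0 := incomp_inf X Y hXY hYX
      refine ⟨fun e => hXY (e ▸ bot_le), fun Z hZ => ?_⟩
      by_contra hZ0
      have hkey : (Z ⊔ Y) ⊓ X = Z := by
        rw [sup_inf_assoc_of_le Y hZ.le, inf_comm Y X, h0, sup_bot_eq]
      have hZY : Z ⊔ Y ≠ ⊤ := by
        intro e; rw [e, top_inf_eq] at hkey; exact hZ.ne' hkey
      refine tri Z X (Z ⊔ Y) hZ0 (fun e => not_top_lt (e ▸ hZ)) (fun e => not_lt_bot (e ▸ hZ))
        (fun e => hYX (e ▸ le_top)) (fun e => hYX (le_sup_right.trans (e ▸ bot_le))) hZY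
        hZ.ne (fun e => hYX ((le_sup_right.trans e.ge).trans hZ.le))
        (fun e => hYX (le_sup_right.trans e.ge)) ?_ ?_ ?_
      · rw [inf_eq_left.mpr hZ.le]; exact hZ0
      · rw [inf_eq_left.mpr le_sup_left]; exact hZ0
      · rw [inf_comm, hkey]; exact hZ0
    by_cases htot : ∀ A B : Submodule R M, A ≤ B ∨ B ≤ A
    · left
      refine ⟨htot, ?_⟩
      rintro ⟨A, B, C, h1, h2, h3, h4⟩
      exact chain A B C h1 h2 h3 h4
    · push_neg at htot
      obtain ⟨X, Y, hXY, hYX⟩ := htot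
      have hX := incomp_atom X Y hXY hYX
      have hY := incomp_atom Y X hYX hXY
      have h0 := incomp_inf X Y hXY hYX
      by_cases hT : X ⊔ Y = ⊤
      · exact Or.inr (Or.inl ⟨X, Y, isSimpleModule_iff_isAtom.mpr hX,
          isSimpleModule_iff_isAtom.mpr hY, h0, hT⟩)
      · right; right
        have hXlt : X < X ⊔ Y := left_lt_sup.mpr hYX
        have hcoatomT : IsCoatom (X ⊔ Y) := by
          refine ⟨hT, fun K hK => ?_⟩
          by_contra hK'
          exact chain X (X ⊔ Y) K (bot_lt_iff_ne_bot.mpr hX.1) hXlt hK (lt_top_iff_ne_top.mpr hK')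
        have huniq : ∀ K : Submodule R M, IsCoatom K → K = X ⊔ Y := by
          intro K hK
          by_cases h1 : K ≤ X ⊔ Y
          · rcases eq_or_lt_of_le h1 with e | l
            · exact e
            · exact absurd (hK.2 _ l) hT
          by_cases h2 : X ⊔ Y ≤ K
          · rcases eq_or_lt_of_le h2 with e | l
            · exact e.symm
            · exact absurd (chain X (X ⊔ Y) K (bot_lt_iff_ne_bot.mpr hX.1) hXlt l
                (lt_top_iff_ne_top.mpr hK.1)) (fun e => e)
          · exact absurd ((incomp_atom (X ⊔ Y) K h2 h1).2 X hXlt) hX.1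
        have hsoc : socle R M = X ⊔ Y := by
          apply le_antisymm
          · apply sSup_le
            intro A hA
            have hAatom : IsAtom A := isSimpleModule_iff_isAtom.mp hA
            by_cases hle : A ≤ X ⊔ Y
            · exact hle
            by_cases hge : X ⊔ Y ≤ A
            · exfalso
              have hXA : X = A :=
                (hAatom.le_iff.mp (le_sup_left.trans hge)).resolve_left hX.1
              exact hYX ((le_sup_right.trans hge).trans hXA.ge)
            · exact absurd ((incomp_atom (X ⊔ Y) A hge hle).2 X hXlt) hX.1
          · exact sup_le (le_sSup (isSimpleModule_iff_isAtom.mpr hX))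
              (le_sSup (isSimpleModule_iff_isAtom.mpr hY))
        refine ⟨X, Y, isSimpleModule_iff_isAtom.mpr hX, isSimpleModule_iff_isAtom.mpr hY,
          h0, hsoc, ?_, ?_⟩
        · rw [hsoc]; exact hcoatomT
        · intro K hK; rw [hsoc]; exact huniq K hK
  · -- reverse direction
    rintro hcase ⟨A, B, C, ⟨hA0, hA1⟩, ⟨hB0, hB1⟩, ⟨hC0, hC1⟩, hAB, hAC, hBC,
      hiAB, hiAC, hiBC⟩
    rcases hcase with ⟨htot, hch⟩ | ⟨S₁, S₂, hs1, hs2, h12, hsup⟩ |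
      ⟨S₁, S₂, hs1, hs2, h12, hsoc, hco, huniq⟩
    · -- case (i)
      have key : ∀ x y z : Submodule R M, x ≠ ⊥ → z ≠ ⊤ → x ≤ y → y ≤ z →
          x ≠ y → y ≠ z → False := by
        intro x y z hx hz hl1 hl2 hne1 hne2
        exact hch ⟨x, y, z, hx.bot_lt, hl1.lt_of_ne hne1, hl2.lt_of_ne hne2, hz.lt_top⟩
      rcases htot A B with hab | hba <;> rcases htot A C with hac | hca <;>
        rcases htot B C with hbc | hcb
      · exact key A B C hA0 hC1 hab hbc hAB hBC
      · exact key A C B hA0 hB1 hac hcb hAC hBC.symm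
      · exact key C A B hC0 hB1 hca hab hAC.symm hAB
      · exact key C A B hC0 hB1 hca hab hAC.symm hAB
      · exact key B A C hB0 hC1 hba hac hAB.symm hAC
      · exact hAB (le_antisymm (hac.trans hcb) hba)
      · exact key B C A hB0 hA1 hbc hca hBC hAC.symm
      · exact key C B A hC0 hA1 hcb hba hBC.symm hAB.symm
    · -- case (ii)
      have a1 : IsAtom S₁ := isSimpleModule_iff_isAtom.mp hs1
      have a2 : IsAtom S₂ := isSimpleModule_iff_isAtom.mp hs2
      have hAatom : IsAtom A := aux_len2_atom a1 a2 h12 hA0 (by rw [hsup]; exact hA1.lt_top)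
      have hBatom : IsAtom B := aux_len2_atom a1 a2 h12 hB0 (by rw [hsup]; exact hB1.lt_top)
      exact hiAB (hAatom.disjoint_of_ne hBatom hAB).eq_bot
    · -- case (iii)
      have a1 : IsAtom S₁ := isSimpleModule_iff_isAtom.mp hs1
      have a2 : IsAtom S₂ := isSimpleModule_iff_isAtom.mp hs2
      set T := S₁ ⊔ S₂ with hTdef
      rw [hsoc] at hco huniq
      -- Step 1: every nonzero submodule meets T nontrivially
      have hemeet : ∀ N : Submodule R M, N ≠ ⊥ → N ⊓ T ≠ ⊥ := by
        intro N hN0 hmeet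
        have hNnleT : ¬ N ≤ T := by
          intro hle
          exact hN0 (by rw [← hmeet, inf_eq_left.mpr hle])
        have hsupT : N ⊔ T = ⊤ := hco.2 _ (right_lt_sup.mpr hNnleT)
        have hXT : (S₁ ⊔ N) ⊓ T = S₁ := by
          rw [sup_inf_assoc_of_le N le_sup_left, hmeet, sup_bot_eq]
        have hXS2 : (S₁ ⊔ N) ⊓ S₂ = ⊥ := by
          calc (S₁ ⊔ N) ⊓ S₂ = (S₁ ⊔ N) ⊓ (T ⊓ S₂) := by
                rw [inf_eq_right.mpr (le_sup_right : S₂ ≤ T)]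
            _ = ((S₁ ⊔ N) ⊓ T) ⊓ S₂ := by rw [inf_assoc]
            _ = S₁ ⊓ S₂ := by rw [hXT]
            _ = ⊥ := h12
        have hXsup : (S₁ ⊔ N) ⊔ S₂ = ⊤ := by
          rw [sup_right_comm, ← hTdef, sup_comm T N]; exact hsupT
        have hXne : S₁ ⊔ N ≠ ⊤ := by
          intro e
          exact a2.1 (by rw [← hXS2, e, top_inf_eq])
        have hXco : IsCoatom (S₁ ⊔ N) := by
          refine ⟨hXne, fun K hK => ?_⟩
          rcases a2.le_iff.mp (inf_le_right : K ⊓ S₂ ≤ S₂) with hh | hh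
          · exfalso
            have key : ((S₁ ⊔ N) ⊔ S₂) ⊓ K = (S₁ ⊔ N) ⊔ S₂ ⊓ K :=
              sup_inf_assoc_of_le S₂ hK.le
            rw [hXsup, top_inf_eq, inf_comm S₂ K, hh, sup_bot_eq] at key
            exact hK.ne' key
          · have : S₂ ≤ K := by rw [← hh]; exact inf_le_left
            exact top_le_iff.mp (hXsup ▸ sup_le hK.le this)
        have hXeq : S₁ ⊔ N = T := huniq _ hXco
        have hS2le : S₂ ≤ S₁ ⊔ N := by rw [hXeq]; exact le_sup_right
        exact a2.1 (le_bot_iff.mp (hXS2 ▸ le_inf hS2le le_rfl))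
      -- Step 2: every nontrivial proper submodule is below T
      have hleT : ∀ N : Submodule R M, N ≠ ⊥ → N ≠ ⊤ → N ≤ T := by
        intro N hN0 hN1
        by_contra hNnle
        have hsupT : N ⊔ T = ⊤ := hco.2 _ (right_lt_sup.mpr hNnle)
        have hD0 : N ⊓ T ≠ ⊥ := hemeet N hN0
        have hDltT : N ⊓ T < T := by
          refine lt_of_le_of_ne inf_le_right (fun e => ?_)
          have hTN : T ≤ N := by rw [← e]; exact inf_le_left
          rcases eq_or_lt_of_le hTN with e' | l'
          · exact hNnle e'.ge
          · exact hN1 (hco.2 N l')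
        have hDatom : IsAtom (N ⊓ T) := aux_len2_atom a1 a2 h12 hD0 hDltT
        have hNco : IsCoatom N := by
          refine ⟨hN1, fun K hK => ?_⟩
          by_cases hKT : T ≤ K
          · exact top_le_iff.mp (hsupT ▸ sup_le hK.le hKT)
          · have hDle : N ⊓ T ≤ K ⊓ T := le_inf (inf_le_left.trans hK.le) inf_le_right
            have hKT0 : K ⊓ T ≠ ⊥ := fun e => hD0 (le_bot_iff.mp (e ▸ hDle))
            have hKTlt : K ⊓ T < T :=
              lt_of_le_of_ne inf_le_right (fun e => hKT (by rw [← e]; exact inf_le_left))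
            have hKTatom : IsAtom (K ⊓ T) := aux_len2_atom a1 a2 h12 hKT0 hKTlt
            have hDK : N ⊓ T = K ⊓ T := (hKTatom.le_iff.mp hDle).resolve_left hD0
            exfalso
            have key : (N ⊔ T) ⊓ K = N ⊔ T ⊓ K := sup_inf_assoc_of_le T hK.le
            rw [hsupT, top_inf_eq, inf_comm T K, ← hDK,
              sup_eq_left.mpr (inf_le_left : N ⊓ T ≤ N)] at key
            exact hK.ne' key
        exact hNnle ((huniq N hNco).le)
      -- Step 3: classify nontrivial submodules
      have hclass : ∀ N : Submodule R M, N ≠ ⊥ → N ≠ ⊤ → IsAtom N ∨ N = T := by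
        intro N hN0 hN1
        rcases eq_or_lt_of_le (hleT N hN0 hN1) with e | l
        · exact Or.inr e
        · exact Or.inl (aux_len2_atom a1 a2 h12 hN0 l)
      rcases hclass A hA0 hA1 with hAa | hAt <;> rcases hclass B hB0 hB1 with hBa | hBt <;>
        rcases hclass C hC0 hC1 with hCa | hCt
      · exact hiAB (hAa.disjoint_of_ne hBa hAB).eq_bot
      · exact hiAB (hAa.disjoint_of_ne hBa hAB).eq_bot
      · exact hiAC (hAa.disjoint_of_ne hCa hAC).eq_bot
      · exact hBC (hBt.trans hCt.symm)
      · exact hiBC (hBa.disjoint_of_ne hCa hBC).eq_bot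
      · exact hAC (hAt.trans hCt.symm)
      · exact hAB (hAt.trans hBt.symm)
      · exact hAB (hAt.trans hBt.symm)
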